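/- (Induction step of the Austrian lemma, one dimension.) Let 𝓑 ⊆ (ℝ₊*)^ℕ be closed under addition, multiplication and inverse, containing positive constants and a sequence tending to 0; define A_𝓑 and I_𝓑 as the polynomially overgenerated ring and its canonical ideal. Let (u_n) be a sequence of C² functions on ℝ such that for every compact K, both (sup_K |u_n|)_n, (sup_K |u_n'|)_n and (sup_K |u_n''|)_n lie in A_𝓑 and (sup_K |u_n|)_n lies in I_𝓑. Then for every compact K, (sup_K |u_n'|)_n lies in I_𝓑. -/

import Mathlib

private lemma abs_le_ciSup_of_mem {L : Set ℝ} (hL : IsCompact L) {f : ℝ → ℝ}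
    (hf : Continuous f) {y : ℝ} (hy : y ∈ L) : |f y| ≤ ⨆ x : L, |f x| := by
  have hbdd : BddAbove ((fun y => |f y|) '' L) := (hL.image hf.abs).bddAbove
  rw [Set.image_eq_range] at hbdd
  exact le_ciSup hbdd ⟨y, hy⟩

/-- Induction step of the Austrian lemma, one dimension: with `A_𝓑`, `I_𝓑`
as in the definition of polynomially overgenerated rings over `ℕ`, if `(u_n)` is a
sequence of `C²` functions on `ℝ` with `(sup_K |u_n|)_n`, `(sup_K |u_n'|)_n` and
`(sup_K |u_n''|)_n` in `A_𝓑` for every compact `K`, and `(sup_K |u_n|)_n ∈ I_𝓑` for every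
compact `K`, then `(sup_K |u_n'|)_n ∈ I_𝓑` for every compact `K`. -/
theorem austrian_lemma_induction_step_dim_one
    (𝓑 : Set (ℕ → ℝ))
    (hpos : ∀ b ∈ 𝓑, ∀ n, 0 < b n)
    (hadd : ∀ b ∈ 𝓑, ∀ b' ∈ 𝓑, (fun n => b n + b' n) ∈ 𝓑)
    (hmul : ∀ b ∈ 𝓑, ∀ b' ∈ 𝓑, (fun n => b n * b' n) ∈ 𝓑)
    (hinv : ∀ b ∈ 𝓑, (fun n => (b n)⁻¹) ∈ 𝓑)
    (hconst : ∀ c : ℝ, 0 < c → (fun _ : ℕ => c) ∈ 𝓑)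
    (hzero : ∃ a ∈ 𝓑, Filter.Tendsto a Filter.atTop (nhds 0))
    (u : ℕ → ℝ → ℝ)
    (hC2 : ∀ n, ContDiff ℝ 2 (u n))
    (hmod0 : ∀ K : Set ℝ, IsCompact K →
      ∃ b ∈ 𝓑, ∃ N : ℕ, ∀ n ≥ N, (⨆ x : K, |u n x|) ≤ b n)
    (hmod1 : ∀ K : Set ℝ, IsCompact K →
      ∃ b ∈ 𝓑, ∃ N : ℕ, ∀ n ≥ N, (⨆ x : K, |deriv (u n) x|) ≤ b n)
    (hmod2 : ∀ K : Set ℝ, IsCompact K →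
      ∃ b ∈ 𝓑, ∃ N : ℕ, ∀ n ≥ N, (⨆ x : K, |deriv (deriv (u n)) x|) ≤ b n)
    (hneg0 : ∀ K : Set ℝ, IsCompact K →
      ∀ b ∈ 𝓑, ∃ N : ℕ, ∀ n ≥ N, (⨆ x : K, |u n x|) ≤ b n) :
    ∀ K : Set ℝ, IsCompact K →
      ∀ b ∈ 𝓑, ∃ N : ℕ, ∀ n ≥ N, (⨆ x : K, |deriv (u n) x|) ≤ b n := by
  -- differentiability facts
  have hdiff : ∀ n, Differentiable ℝ (u n) := fun n =>
    (hC2 n).differentiable (by norm_num)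
  have hC1d : ∀ n, ContDiff ℝ 1 (deriv (u n)) := by
    intro n
    have h := (contDiff_succ_iff_deriv (n := 1)).mp
      (by exact_mod_cast hC2 n : ContDiff ℝ ((1 : WithTop ℕ∞) + 1) (u n))
    exact h.2.2
  have hdiffd : ∀ n, Differentiable ℝ (deriv (u n)) := fun n =>
    (hC1d n).differentiable one_ne_zero
  have hcontdd : ∀ n, Continuous (deriv (deriv (u n))) := by
    intro n
    have h := (contDiff_succ_iff_deriv (n := 0)).mp
      (by exact_mod_cast hC1d n : ContDiff ℝ ((0 : WithTop ℕ∞) + 1) (deriv (u n)))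
    exact contDiff_zero.mp h.2.2
  intro K hK b hb
  -- enclosing compact interval L
  obtain ⟨R, hKR⟩ := hK.isBounded.subset_closedBall 0
  set L : Set ℝ := Set.Icc (0 - (R + 1)) (0 + (R + 1)) with hLdef
  have hL : IsCompact L := isCompact_Icc
  have hKL : ∀ {x : ℝ}, x ∈ K → Set.Icc x (x + 1) ⊆ L := by
    intro x hx
    have hxR : x ∈ Set.Icc (0 - R) (0 + R) := by
      rw [← Real.closedBall_eq_Icc]; exact hKR hx
    intro y hy
    constructor
    · linarith [hy.1, hxR.1]
    · linarith [hy.2, hxR.2]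
  -- second derivative modulus on L
  obtain ⟨β, hβ𝓑, N₂, hN₂⟩ := hmod2 L hL
  -- the step sequence h n = b n / (2 (β n + b n))
  set s : ℕ → ℝ := fun n => 2 * (β n + b n) with hsdef
  have hs𝓑 : s ∈ 𝓑 := hmul _ (hconst 2 (by norm_num)) _ (hadd _ hβ𝓑 _ hb)
  set hstep : ℕ → ℝ := fun n => b n * (s n)⁻¹ with hstepdef
  have hstep𝓑 : hstep ∈ 𝓑 := hmul _ hb _ (hinv _ hs𝓑)
  -- the small sequence c n = b n * h n * (1/4)
  set c : ℕ → ℝ := fun n => b n * hstep n * (1/4) with hcdef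
  have hc𝓑 : c ∈ 𝓑 := hmul _ (hmul _ hb _ hstep𝓑) _ (hconst (1/4) (by norm_num))
  obtain ⟨N₀, hN₀⟩ := hneg0 L hL c hc𝓑
  refine ⟨max N₂ N₀, fun n hn => ?_⟩
  have hn₂ : n ≥ N₂ := le_trans (le_max_left _ _) hn
  have hn₀ : n ≥ N₀ := le_trans (le_max_right _ _) hn
  have hbpos : 0 < b n := hpos b hb n
  have hβpos : 0 < β n := hpos β hβ𝓑 n
  have hspos : 0 < s n := hpos s hs𝓑 n
  have hhpos : 0 < hstep n := hpos hstep hstep𝓑 n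
  have hh1 : hstep n ≤ 1 := by
    rw [hstepdef]
    simp only
    rw [hsdef]
    simp only
    rw [mul_inv_le_iff₀ (by positivity)]
    nlinarith
  -- pointwise bounds on L
  have hbd0 : ∀ y ∈ L, |u n y| ≤ c n := fun y hy =>
    le_trans (abs_le_ciSup_of_mem hL (hC2 n).continuous hy) (hN₀ n hn₀)
  have hbd2 : ∀ y ∈ L, |deriv (deriv (u n)) y| ≤ β n := fun y hy =>
    le_trans (abs_le_ciSup_of_mem hL (hcontdd n) hy) (hN₂ n hn₂)
  refine Real.iSup_le (fun x => ?_) hbpos.le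
  obtain ⟨x, hx⟩ := x
  -- x ∈ K; apply MVT twice
  have hsub : Set.Icc x (x + hstep n) ⊆ L :=
    le_trans (Set.Icc_subset_Icc le_rfl (by linarith)) (hKL hx)
  have hxh : x < x + hstep n := by linarith
  obtain ⟨ξ, hξ, hξeq⟩ := exists_hasDerivAt_eq_slope (u n) (deriv (u n)) hxh
    (hC2 n).continuous.continuousOn (fun y _ => (hdiff n y).hasDerivAt)
  have hxξ : x < ξ := hξ.1
  obtain ⟨η, hη, hηeq⟩ := exists_hasDerivAt_eq_slope (deriv (u n)) (deriv (deriv (u n))) hxξ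
    (hC1d n).continuous.continuousOn (fun y _ => (hdiffd n y).hasDerivAt)
  -- memberships
  have hξL : ξ ∈ L := hsub ⟨hξ.1.le, hξ.2.le⟩
  have hηL : η ∈ L := hsub ⟨hη.1.le, le_trans hη.2.le hξ.2.le⟩
  have hxL : x ∈ L := hsub ⟨le_rfl, by linarith⟩
  have hxhL : x + hstep n ∈ L := hsub ⟨by linarith, le_rfl⟩
  -- bound |u' ξ|
  have hbξ : |deriv (u n) ξ| ≤ 2 * c n / hstep n := by
    rw [hξeq]
    rw [abs_div, abs_of_pos (by linarith : (0:ℝ) < x + hstep n - x)]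
    have : x + hstep n - x = hstep n := by ring
    rw [this, div_le_div_iff_of_pos_right hhpos]
    calc |u n (x + hstep n) - u n x| ≤ |u n (x + hstep n)| + |u n x| := abs_sub _ _
      _ ≤ c n + c n := add_le_add (hbd0 _ hxhL) (hbd0 _ hxL)
      _ = 2 * c n := by ring
  -- express u' x
  have hux : deriv (u n) x = deriv (u n) ξ - deriv (deriv (u n)) η * (ξ - x) := by
    have hne : ξ - x ≠ 0 := ne_of_gt (by linarith)
    rw [hηeq, div_mul_cancel₀ _ hne]; ring
  have key : |deriv (u n) x| ≤ 2 * c n / hstep n + β n * hstep n := by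
    rw [hux]
    calc |deriv (u n) ξ - deriv (deriv (u n)) η * (ξ - x)|
        ≤ |deriv (u n) ξ| + |deriv (deriv (u n)) η| * |ξ - x| := by
          rw [← abs_mul]; exact abs_sub _ _
      _ ≤ 2 * c n / hstep n + β n * hstep n := by
          refine add_le_add hbξ (mul_le_mul (hbd2 _ hηL) ?_ (abs_nonneg _) hβpos.le)
          rw [abs_of_pos (by linarith : (0:ℝ) < ξ - x)]
          linarith [hξ.2]
  refine le_trans key ?_
  -- arithmetic: 2 c / h = b/2 and β h ≤ b/2
  have h1 : 2 * c n / hstep n = b n / 2 := by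
    rw [hcdef]
    field_simp
    ring
  have h2 : β n * hstep n ≤ b n / 2 := by
    have hx : hstep n = b n / (2 * (β n + b n)) := by
      rw [hstepdef, hsdef]; field_simp
    rw [hx, ← mul_div_assoc, div_le_div_iff₀ (by positivity) two_pos]
    nlinarith
  rw [h1]; linarith
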